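/- Let B be a unital *-algebra and (A,E) a B-valued *-noncommutative probability space. Suppose y = ux with u unitary, E(u)=0, x self-adjoint, and u, x *-free over B. Then for all integers n,m,k ≥ 0: E((yy*)^n (y*y)^m (yy*)^k) = E(u E(x^{2n} E(u* E(x^{2m}) u) x^{2k}) u*) − E(u E(x^{2n}) E(u* E(x^{2m}) u) E(x^{2k}) u*) + E(u E(x^{2n}) u* E(x^{2m}) u E(x^{2k}) u*). -/

import Mathlib

open scoped BigOperators

/-- Two subsets `S`, `T` (each containing `B`) are free with respect to `E`:
any alternating product of `E`-centered elements from `S` and `T` has zero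
expectation. The label `true` marks elements of `S`, `false` elements of `T`. -/
def FreePair {A : Type*} [Ring A] [StarRing A] [Algebra ℂ A]
    (E : A →ₗ[ℂ] A) (S T : Set A) : Prop :=
  ∀ l : List (A × Bool), l ≠ [] →
    (∀ p ∈ l, E p.1 = 0 ∧ (p.2 = true → p.1 ∈ S) ∧ (p.2 = false → p.1 ∈ T)) →
    l.Chain' (fun p q => p.2 ≠ q.2) →
    E (l.map Prod.fst).prod = 0

section FreeHelpers

variable {A : Type*} [Ring A] [StarRing A] [Algebra ℂ A]
variable {E : A →ₗ[ℂ] A} {S T : Set A}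

lemma free_ST (h : FreePair E S T) {s t : A}
    (hs : s ∈ S) (ht : t ∈ T) (es : E s = 0) (et : E t = 0) :
    E (s * t) = 0 := by
  have key := h [(s, true), (t, false)] (by simp) ?_ (by simp [List.Chain'])
  · simpa [mul_assoc] using key
  · rintro ⟨p1, p2⟩ hp
    simp only [List.mem_cons, List.not_mem_nil, or_false, Prod.mk.injEq] at hp
    rcases hp with ⟨rfl, rfl⟩ | ⟨rfl, rfl⟩
    · exact ⟨es, fun _ => hs, by simp⟩
    · exact ⟨et, by simp, fun _ => ht⟩

lemma free_TS (h : FreePair E S T) {t s : A}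
    (ht : t ∈ T) (hs : s ∈ S) (et : E t = 0) (es : E s = 0) :
    E (t * s) = 0 := by
  have key := h [(t, false), (s, true)] (by simp) ?_ (by simp [List.Chain'])
  · simpa [mul_assoc] using key
  · rintro ⟨p1, p2⟩ hp
    simp only [List.mem_cons, List.not_mem_nil, or_false, Prod.mk.injEq] at hp
    rcases hp with ⟨rfl, rfl⟩ | ⟨rfl, rfl⟩
    · exact ⟨et, by simp, fun _ => ht⟩
    · exact ⟨es, fun _ => hs, by simp⟩

lemma free_STS (h : FreePair E S T) {s1 t1 s2 : A}
    (hs1 : s1 ∈ S) (ht1 : t1 ∈ T) (hs2 : s2 ∈ S)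
    (es1 : E s1 = 0) (et1 : E t1 = 0) (es2 : E s2 = 0) :
    E (s1 * t1 * s2) = 0 := by
  have key := h [(s1, true), (t1, false), (s2, true)] (by simp) ?_ (by simp [List.Chain'])
  · simpa [mul_assoc] using key
  · rintro ⟨p1, p2⟩ hp
    simp only [List.mem_cons, List.not_mem_nil, or_false, Prod.mk.injEq] at hp
    rcases hp with ⟨rfl, rfl⟩ | ⟨rfl, rfl⟩ | ⟨rfl, rfl⟩
    · exact ⟨es1, fun _ => hs1, by simp⟩
    · exact ⟨et1, by simp, fun _ => ht1⟩
    · exact ⟨es2, fun _ => hs2, by simp⟩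

lemma free_STST (h : FreePair E S T) {s1 t1 s2 t2 : A}
    (hs1 : s1 ∈ S) (ht1 : t1 ∈ T) (hs2 : s2 ∈ S) (ht2 : t2 ∈ T)
    (es1 : E s1 = 0) (et1 : E t1 = 0) (es2 : E s2 = 0) (et2 : E t2 = 0) :
    E (s1 * t1 * s2 * t2) = 0 := by
  have key := h [(s1, true), (t1, false), (s2, true), (t2, false)] (by simp) ?_ (by simp [List.Chain'])
  · simpa [mul_assoc] using key
  · rintro ⟨p1, p2⟩ hp
    simp only [List.mem_cons, List.not_mem_nil, or_false, Prod.mk.injEq] at hp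
    rcases hp with ⟨rfl, rfl⟩ | ⟨rfl, rfl⟩ | ⟨rfl, rfl⟩ | ⟨rfl, rfl⟩
    · exact ⟨es1, fun _ => hs1, by simp⟩
    · exact ⟨et1, by simp, fun _ => ht1⟩
    · exact ⟨es2, fun _ => hs2, by simp⟩
    · exact ⟨et2, by simp, fun _ => ht2⟩

lemma free_TSTS (h : FreePair E S T) {t1 s1 t2 s2 : A}
    (ht1 : t1 ∈ T) (hs1 : s1 ∈ S) (ht2 : t2 ∈ T) (hs2 : s2 ∈ S)
    (et1 : E t1 = 0) (es1 : E s1 = 0) (et2 : E t2 = 0) (es2 : E s2 = 0) :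
    E (t1 * s1 * t2 * s2) = 0 := by
  have key := h [(t1, false), (s1, true), (t2, false), (s2, true)] (by simp) ?_ (by simp [List.Chain'])
  · simpa [mul_assoc] using key
  · rintro ⟨p1, p2⟩ hp
    simp only [List.mem_cons, List.not_mem_nil, or_false, Prod.mk.injEq] at hp
    rcases hp with ⟨rfl, rfl⟩ | ⟨rfl, rfl⟩ | ⟨rfl, rfl⟩ | ⟨rfl, rfl⟩
    · exact ⟨et1, by simp, fun _ => ht1⟩
    · exact ⟨es1, fun _ => hs1, by simp⟩
    · exact ⟨et2, by simp, fun _ => ht2⟩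
    · exact ⟨es2, fun _ => hs2, by simp⟩

lemma free_STSTS (h : FreePair E S T) {s1 t1 s2 t2 s3 : A}
    (hs1 : s1 ∈ S) (ht1 : t1 ∈ T) (hs2 : s2 ∈ S) (ht2 : t2 ∈ T) (hs3 : s3 ∈ S)
    (es1 : E s1 = 0) (et1 : E t1 = 0) (es2 : E s2 = 0) (et2 : E t2 = 0) (es3 : E s3 = 0) :
    E (s1 * t1 * s2 * t2 * s3) = 0 := by
  have key := h [(s1, true), (t1, false), (s2, true), (t2, false), (s3, true)]
    (by simp) ?_ (by simp [List.Chain'])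
  · simpa [mul_assoc] using key
  · rintro ⟨p1, p2⟩ hp
    simp only [List.mem_cons, List.not_mem_nil, or_false, Prod.mk.injEq] at hp
    rcases hp with ⟨rfl, rfl⟩ | ⟨rfl, rfl⟩ | ⟨rfl, rfl⟩ | ⟨rfl, rfl⟩ | ⟨rfl, rfl⟩
    · exact ⟨es1, fun _ => hs1, by simp⟩
    · exact ⟨et1, by simp, fun _ => ht1⟩
    · exact ⟨es2, fun _ => hs2, by simp⟩
    · exact ⟨et2, by simp, fun _ => ht2⟩
    · exact ⟨es3, fun _ => hs3, by simp⟩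

lemma free_STSTSTS (h : FreePair E S T) {s1 t1 s2 t2 s3 t3 s4 : A}
    (hs1 : s1 ∈ S) (ht1 : t1 ∈ T) (hs2 : s2 ∈ S) (ht2 : t2 ∈ T)
    (hs3 : s3 ∈ S) (ht3 : t3 ∈ T) (hs4 : s4 ∈ S)
    (es1 : E s1 = 0) (et1 : E t1 = 0) (es2 : E s2 = 0) (et2 : E t2 = 0)
    (es3 : E s3 = 0) (et3 : E t3 = 0) (es4 : E s4 = 0) :
    E (s1 * t1 * s2 * t2 * s3 * t3 * s4) = 0 := by
  have key := h [(s1, true), (t1, false), (s2, true), (t2, false), (s3, true),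
    (t3, false), (s4, true)] (by simp) ?_ (by simp [List.Chain'])
  · simpa [mul_assoc] using key
  · rintro ⟨p1, p2⟩ hp
    simp only [List.mem_cons, List.not_mem_nil, or_false, Prod.mk.injEq] at hp
    rcases hp with ⟨rfl, rfl⟩ | ⟨rfl, rfl⟩ | ⟨rfl, rfl⟩ | ⟨rfl, rfl⟩ | ⟨rfl, rfl⟩
      | ⟨rfl, rfl⟩ | ⟨rfl, rfl⟩
    · exact ⟨es1, fun _ => hs1, by simp⟩
    · exact ⟨et1, by simp, fun _ => ht1⟩
    · exact ⟨es2, fun _ => hs2, by simp⟩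
    · exact ⟨et2, by simp, fun _ => ht2⟩
    · exact ⟨es3, fun _ => hs3, by simp⟩
    · exact ⟨et3, by simp, fun _ => ht3⟩
    · exact ⟨es4, fun _ => hs4, by simp⟩

end FreeHelpers

/-- The key computation: for `u` centered and `a, b, c` in the second algebra. -/
lemma key_formula {A : Type*} [Ring A] [StarRing A] [Algebra ℂ A] [StarModule ℂ A]
    (B : StarSubalgebra ℂ A) (E : A →ₗ[ℂ] A)
    (hErange : ∀ a : A, E a ∈ B)
    (hEid : ∀ b ∈ B, E b = b)
    (hEbimod : ∀ a : A, ∀ b₁ ∈ B, ∀ b₂ ∈ B, E (b₁ * a * b₂) = b₁ * E a * b₂)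
    (u : A) (hEu : E u = 0) (hEu' : E (star u) = 0)
    (S T : Set A)
    (hfree : FreePair E S T)
    (hSB : ∀ b ∈ B, b ∈ S) (hTB : ∀ b ∈ B, b ∈ T)
    (hSmul : ∀ p ∈ S, ∀ q ∈ S, p * q ∈ S)
    (hTmul : ∀ p ∈ T, ∀ q ∈ T, p * q ∈ T)
    (hSsub : ∀ p ∈ S, ∀ q ∈ S, p - q ∈ S)
    (hTsub : ∀ p ∈ T, ∀ q ∈ T, p - q ∈ T)
    (hu : u ∈ S) (hu' : star u ∈ S)
    (a b c : A) (ha : a ∈ T) (hb : b ∈ T) (hc : c ∈ T) :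
    E (u * a * star u * b * u * c * star u)
      = E (u * E (a * E (star u * E b * u) * c) * star u)
        - E (u * E a * E (star u * E b * u) * E c * star u)
        + E (u * E a * star u * E b * u * E c * star u) := by
  have hES : ∀ z : A, E z ∈ S := fun z => hSB _ (hErange z)
  have hET : ∀ z : A, E z ∈ T := fun z => hTB _ (hErange z)
  have hEE : ∀ z : A, E (E z) = E z := fun z => hEid _ (hErange z)
  have hcent : ∀ z : A, E (z - E z) = 0 := by
    intro z; rw [map_sub, hEE, sub_self]
  have hEr : ∀ z bb : A, bb ∈ B → E (z * bb) = E z * bb := by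
    intro z bb hbb
    have h := hEbimod z 1 B.one_mem bb hbb
    simpa using h
  have hEl : ∀ z bb : A, bb ∈ B → E (bb * z) = bb * E z := by
    intro z bb hbb
    have h := hEbimod z bb hbb 1 B.one_mem
    simpa using h
  -- centered elements
  have haT : a - E a ∈ T := hTsub _ ha _ (hET a)
  have hbT : b - E b ∈ T := hTsub _ hb _ (hET b)
  have hcT : c - E c ∈ T := hTsub _ hc _ (hET c)
  have hea : E (a - E a) = 0 := hcent a
  have heb : E (b - E b) = 0 := hcent b
  have hec : E (c - E c) = 0 := hcent c
  -- useful S elements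
  have hgS : u * E c * star u ∈ S := hSmul _ (hSmul _ hu _ (hES c)) _ hu'
  have hsS : u * E a * star u ∈ S := hSmul _ (hSmul _ hu _ (hES a)) _ hu'
  have hmS : star u * E b * u ∈ S := hSmul _ (hSmul _ hu' _ (hES b)) _ hu
  have hs2S : u * E a * star u * E b * u ∈ S :=
    hSmul _ (hSmul _ hsS _ (hES b)) _ hu
  have htS : star u * E b * u * E c * star u ∈ S :=
    hSmul _ (hSmul _ hmS _ (hES c)) _ hu'
  -- term (000)
  have hW000 : E (u * (a - E a) * star u * (b - E b) * u * (c - E c) * star u) = 0 :=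
    free_STSTSTS hfree hu haT hu' hbT hu hcT hu' hEu hea hEu' heb hEu hec hEu'
  -- term (001)
  have hW001 : E (u * (a - E a) * star u * (b - E b) * u * E c * star u) = 0 := by
    have h5 : E (u * (a - E a) * star u * (b - E b)
        * (u * E c * star u - E (u * E c * star u))) = 0 :=
      free_STSTS hfree hu haT hu' hbT (hSsub _ hgS _ (hES _))
        hEu hea hEu' heb (hcent _)
    have h4 : E (u * (a - E a) * star u * (b - E b)) = 0 :=
      free_STST hfree hu haT hu' hbT hEu hea hEu' heb
    have hsplit : u * (a - E a) * star u * (b - E b) * u * E c * star u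
        = u * (a - E a) * star u * (b - E b) * (u * E c * star u - E (u * E c * star u))
          + u * (a - E a) * star u * (b - E b) * E (u * E c * star u) := by
      noncomm_ring
    rw [hsplit, map_add, h5, hEr _ _ (hErange _), h4, zero_mul, add_zero]
  -- term (011)
  have hW011 : E (u * (a - E a) * star u * E b * u * E c * star u) = 0 := by
    have h3 : E (u * (a - E a)
        * (star u * E b * u * E c * star u - E (star u * E b * u * E c * star u))) = 0 :=
      free_STS hfree hu haT (hSsub _ htS _ (hES _)) hEu hea (hcent _)
    have h2 : E (u * (a - E a)) = 0 := free_ST hfree hu haT hEu hea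
    have hsplit : u * (a - E a) * star u * E b * u * E c * star u
        = u * (a - E a)
            * (star u * E b * u * E c * star u - E (star u * E b * u * E c * star u))
          + u * (a - E a) * E (star u * E b * u * E c * star u) := by
      noncomm_ring
    rw [hsplit, map_add, h3, hEr _ _ (hErange _), h2, zero_mul, add_zero]
  -- term (100)
  have hW100 : E (u * E a * star u * (b - E b) * u * (c - E c) * star u) = 0 := by
    have h5 : E ((u * E a * star u - E (u * E a * star u))
        * (b - E b) * u * (c - E c) * star u) = 0 :=
      free_STSTS hfree (hSsub _ hsS _ (hES _)) hbT hu hcT hu'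
        (hcent _) heb hEu hec hEu'
    have h4 : E ((b - E b) * u * (c - E c) * star u) = 0 :=
      free_TSTS hfree hbT hu hcT hu' heb hEu hec hEu'
    have hsplit : u * E a * star u * (b - E b) * u * (c - E c) * star u
        = (u * E a * star u - E (u * E a * star u)) * (b - E b) * u * (c - E c) * star u
          + E (u * E a * star u) * ((b - E b) * u * (c - E c) * star u) := by
      noncomm_ring
    rw [hsplit, map_add, h5, hEl _ _ (hErange _), h4, mul_zero, add_zero]
  -- term (101)
  have hW101 : E (u * E a * star u * (b - E b) * u * E c * star u) = 0 := by
    have h3 : E ((u * E a * star u - E (u * E a * star u)) * (b - E b)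
        * (u * E c * star u - E (u * E c * star u))) = 0 :=
      free_STS hfree (hSsub _ hsS _ (hES _)) hbT (hSsub _ hgS _ (hES _))
        (hcent _) heb (hcent _)
    have h2 : E ((u * E a * star u - E (u * E a * star u)) * (b - E b)) = 0 :=
      free_ST hfree (hSsub _ hsS _ (hES _)) hbT (hcent _) heb
    have h2' : E ((b - E b) * (u * E c * star u - E (u * E c * star u))) = 0 :=
      free_TS hfree hbT (hSsub _ hgS _ (hES _)) heb (hcent _)
    have hsplit : u * E a * star u * (b - E b) * u * E c * star u
        = (u * E a * star u - E (u * E a * star u)) * (b - E b)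
            * (u * E c * star u - E (u * E c * star u))
          + (u * E a * star u - E (u * E a * star u)) * (b - E b) * E (u * E c * star u)
          + E (u * E a * star u) * ((b - E b) * (u * E c * star u - E (u * E c * star u)))
          + E (u * E a * star u) * (b - E b) * E (u * E c * star u) := by
      noncomm_ring
    rw [hsplit, map_add, map_add, map_add, h3, hEr _ _ (hErange _), h2,
      hEl _ _ (hErange _), h2', hEbimod _ _ (hErange _) _ (hErange _), heb]
    simp
  -- term (110)
  have hW110 : E (u * E a * star u * E b * u * (c - E c) * star u) = 0 := by
    have h3 : E ((u * E a * star u * E b * u - E (u * E a * star u * E b * u))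
        * (c - E c) * star u) = 0 :=
      free_STS hfree (hSsub _ hs2S _ (hES _)) hcT hu' (hcent _) hec hEu'
    have h2 : E ((c - E c) * star u) = 0 := free_TS hfree hcT hu' hec hEu'
    have hsplit : u * E a * star u * E b * u * (c - E c) * star u
        = (u * E a * star u * E b * u - E (u * E a * star u * E b * u))
            * (c - E c) * star u
          + E (u * E a * star u * E b * u) * ((c - E c) * star u) := by
      noncomm_ring
    rw [hsplit, map_add, h3, hEl _ _ (hErange _), h2, mul_zero, add_zero]
  -- term (010): the main surviving term
  have hW010 : E (u * (a - E a) * star u * E b * u * (c - E c) * star u)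
      = E (u * E ((a - E a) * E (star u * E b * u) * (c - E c)) * star u) := by
    have h5 : E (u * (a - E a)
        * (star u * E b * u - E (star u * E b * u)) * (c - E c) * star u) = 0 :=
      free_STSTS hfree hu haT (hSsub _ hmS _ (hES _)) hcT hu'
        hEu hea (hcent _) hec hEu'
    have hdT : (a - E a) * E (star u * E b * u) * (c - E c) ∈ T :=
      hTmul _ (hTmul _ haT _ (hET _)) _ hcT
    have h3 : E (u * ((a - E a) * E (star u * E b * u) * (c - E c)
        - E ((a - E a) * E (star u * E b * u) * (c - E c))) * star u) = 0 :=
      free_STS hfree hu (hTsub _ hdT _ (hET _)) hu' hEu (hcent _) hEu'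
    have hsplit : u * (a - E a) * star u * E b * u * (c - E c) * star u
        = u * (a - E a) * (star u * E b * u - E (star u * E b * u)) * (c - E c) * star u
          + u * ((a - E a) * E (star u * E b * u) * (c - E c)
              - E ((a - E a) * E (star u * E b * u) * (c - E c))) * star u
          + u * E ((a - E a) * E (star u * E b * u) * (c - E c)) * star u := by
      noncomm_ring
    rw [hsplit, map_add, map_add, h5, h3, zero_add, zero_add]
  -- inner expectation of the surviving term
  have hinner : E ((a - E a) * E (star u * E b * u) * (c - E c))
      = E (a * E (star u * E b * u) * c) - E a * E (star u * E b * u) * E c := by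
    have hsplit : (a - E a) * E (star u * E b * u) * (c - E c)
        = a * E (star u * E b * u) * c
          - a * (E (star u * E b * u) * E c)
          - E a * E (star u * E b * u) * c
          + E a * E (star u * E b * u) * E c := by
      noncomm_ring
    rw [hsplit, map_add, map_sub, map_sub,
      hEr _ _ (B.mul_mem (hErange _) (hErange _)),
      hEl c _ (B.mul_mem (hErange _) (hErange _)),
      hEid _ (B.mul_mem (B.mul_mem (hErange _) (hErange _)) (hErange _))]
    noncomm_ring
  -- the eightfold split
  have hsplit8 : u * a * star u * b * u * c * star u
      = u * (a - E a) * star u * (b - E b) * u * (c - E c) * star u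
        + u * (a - E a) * star u * (b - E b) * u * E c * star u
        + u * (a - E a) * star u * E b * u * (c - E c) * star u
        + u * (a - E a) * star u * E b * u * E c * star u
        + u * E a * star u * (b - E b) * u * (c - E c) * star u
        + u * E a * star u * (b - E b) * u * E c * star u
        + u * E a * star u * E b * u * (c - E c) * star u
        + u * E a * star u * E b * u * E c * star u := by
    noncomm_ring
  rw [hsplit8, map_add, map_add, map_add, map_add, map_add, map_add, map_add,
    hW000, hW001, hW011, hW100, hW101, hW110, hW010, hinner]
  have hfin : u * (E (a * E (star u * E b * u) * c)
        - E a * E (star u * E b * u) * E c) * star u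
      = u * E (a * E (star u * E b * u) * c) * star u
        - u * E a * E (star u * E b * u) * E c * star u := by
    noncomm_ring
  rw [hfin, map_sub]
  abel

theorem mixed_moments_formula
    {A : Type*} [Ring A] [StarRing A] [Algebra ℂ A] [StarModule ℂ A]
    (B : StarSubalgebra ℂ A) (E : A →ₗ[ℂ] A)
    (hErange : ∀ a : A, E a ∈ B)
    (hEid : ∀ b ∈ B, E b = b)
    (hEstar : ∀ a : A, E (star a) = star (E a))
    (hEbimod : ∀ a : A, ∀ b₁ ∈ B, ∀ b₂ ∈ B, E (b₁ * a * b₂) = b₁ * E a * b₂)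
    (u x y : A)
    (huu : u * star u = 1) (hsuu : star u * u = 1)
    (hEu : E u = 0) (hxsa : star x = x)
    (hfree : FreePair E
      (StarAlgebra.adjoin ℂ (insert u (B : Set A)) : StarSubalgebra ℂ A)
      (StarAlgebra.adjoin ℂ (insert x (B : Set A)) : StarSubalgebra ℂ A))
    (hy : y = u * x) :
    ∀ n m k : ℕ,
      E ((y * star y) ^ n * (star y * y) ^ m * (y * star y) ^ k)
        = E (u * E (x ^ (2 * n) * E (star u * E (x ^ (2 * m)) * u) * x ^ (2 * k)) * star u)
          - E (u * E (x ^ (2 * n)) * E (star u * E (x ^ (2 * m)) * u) * E (x ^ (2 * k)) * star u)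
          + E (u * E (x ^ (2 * n)) * star u * E (x ^ (2 * m)) * u * E (x ^ (2 * k)) * star u) := by
  intro n m k
  have hu : u ∈ (StarAlgebra.adjoin ℂ (insert u (B : Set A)) : StarSubalgebra ℂ A) :=
    StarAlgebra.subset_adjoin ℂ _ (Set.mem_insert _ _)
  have hx : x ∈ (StarAlgebra.adjoin ℂ (insert x (B : Set A)) : StarSubalgebra ℂ A) :=
    StarAlgebra.subset_adjoin ℂ _ (Set.mem_insert _ _)
  have hEu' : E (star u) = 0 := by rw [hEstar, hEu, star_zero]
  -- reduce the left-hand side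
  have hyy : y * star y = u * x ^ 2 * star u := by
    rw [hy, star_mul, hxsa]; noncomm_ring
  have hy'y : star y * y = x ^ 2 := by
    rw [hy, star_mul, hxsa]
    calc x * star u * (u * x) = x * (star u * u) * x := by noncomm_ring
      _ = x ^ 2 := by rw [hsuu]; noncomm_ring
  have hpow : ∀ j : ℕ, (u * x ^ 2 * star u) ^ j = u * x ^ (2 * j) * star u := by
    intro j
    induction j with
    | zero => simp [huu]
    | succ j ih =>
      rw [pow_succ, ih]
      have h2 : 2 * (j + 1) = 2 * j + 2 := by ring
      rw [h2, pow_add]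
      calc u * x ^ (2 * j) * star u * (u * x ^ 2 * star u)
          = u * x ^ (2 * j) * (star u * u) * x ^ 2 * star u := by noncomm_ring
        _ = u * (x ^ (2 * j) * x ^ 2) * star u := by rw [hsuu]; noncomm_ring
  have hlhs : (y * star y) ^ n * (star y * y) ^ m * (y * star y) ^ k
      = u * x ^ (2 * n) * star u * x ^ (2 * m) * u * x ^ (2 * k) * star u := by
    rw [hyy, hy'y, hpow n, hpow k, ← pow_mul]
    noncomm_ring
  rw [hlhs]
  exact key_formula B E hErange hEid hEbimod u hEu hEu'
    (StarAlgebra.adjoin ℂ (insert u (B : Set A)) : StarSubalgebra ℂ A)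
    (StarAlgebra.adjoin ℂ (insert x (B : Set A)) : StarSubalgebra ℂ A) hfree
    (fun b hb => StarAlgebra.subset_adjoin ℂ _ (Set.mem_insert_of_mem _ hb))
    (fun b hb => StarAlgebra.subset_adjoin ℂ _ (Set.mem_insert_of_mem _ hb))
    (fun p hp q hq => mul_mem hp hq)
    (fun p hp q hq => mul_mem hp hq)
    (fun p hp q hq => sub_mem hp hq)
    (fun p hp q hq => sub_mem hp hq)
    hu (star_mem hu)
    (x ^ (2 * n)) (x ^ (2 * m)) (x ^ (2 * k))
    (pow_mem hx _) (pow_mem hx _) (pow_mem hx _)
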